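/- The DPS instance on the complete graph K₃ (three persons A, B, C with the three relationships A–B, B–C, A–C) in which every edge has frequency 2 admits no valid schedule, even though for each person the local Pinwheel instance with frequencies (2,2) is feasible. -/
import Mathlib


open scoped ENNReal BigOperators

namespace PolySched

variable {V : Type*}

/-- A set of edges is a matching in `G`: all edges belong to `G` and no two
distinct edges share an endpoint. -/
def IsMatchingIn (G : SimpleGraph V) (M : Set (Sym2 V)) : Prop :=
  M ⊆ G.edgeSet ∧ M.Pairwise fun e e' => ∀ v, v ∈ e → v ∉ e'

/-- A schedule is valid for the OPS instance on `G` if each day is a matching. -/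
def OPSValid (G : SimpleGraph V) (S : ℕ → Set (Sym2 V)) : Prop :=
  ∀ t, IsMatchingIn G (S t)

/-- A schedule is valid for the DPS instance `(G, f)`. -/
def DPSValid (G : SimpleGraph V) (f : Sym2 V → ℕ) (S : ℕ → Set (Sym2 V)) : Prop :=
  OPSValid G S ∧ ∀ e ∈ G.edgeSet, ∀ t : ℕ, ∃ i < f e, e ∈ S (t + i)

/-- Recurrence time of edge `e` under schedule `S`: the supremum of `d+1` over
all `d` such that some window of `d` consecutive days misses `e`. -/
noncomputable def recTime (S : ℕ → Set (Sym2 V)) (e : Sym2 V) : ℝ≥0∞ :=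
  ⨆ d ∈ {d : ℕ | ∃ t : ℕ, ∀ i < d, e ∉ S (t + i)}, ((d : ℝ≥0∞) + 1)

/-- Heat of a schedule for the OPS instance `(G, g)`. -/
noncomputable def heat (G : SimpleGraph V) (g : Sym2 V → ℝ) (S : ℕ → Set (Sym2 V)) : ℝ≥0∞ :=
  ⨆ e ∈ G.edgeSet, ENNReal.ofReal (g e) * recTime S e
/-- The DPS instance on the triangle K₃ with all frequencies 2
admits no valid schedule, although each person's local Pinwheel instance with
frequencies (2,2) is feasible. -/
theorem triangle_infeasible :
    (¬ ∃ S : ℕ → Set (Sym2 (Fin 3)),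
        DPSValid (⊤ : SimpleGraph (Fin 3)) (fun _ => 2) S) ∧
    (∃ S : ℕ → Fin 2, ∀ (i : Fin 2) (t : ℕ), ∃ j < 2, S (t + j) = i) := by
  constructor
  · rintro ⟨S, hM, hF⟩
    have key : ∀ (t : ℕ) (e e' : Sym2 (Fin 3)), e ≠ e' → ∀ v, v ∈ e → v ∈ e' →
        e ∈ S t → e' ∈ S t → False := by
      intro t e e' hne v hv hv' he he'
      exact (hM t).2 he he' hne v hv hv'
    have h01 : s((0 : Fin 3), 1) ∈ (⊤ : SimpleGraph (Fin 3)).edgeSet := by decide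
    have h12 : s((1 : Fin 3), 2) ∈ (⊤ : SimpleGraph (Fin 3)).edgeSet := by decide
    have h02 : s((0 : Fin 3), 2) ∈ (⊤ : SimpleGraph (Fin 3)).edgeSet := by decide
    obtain ⟨i1, hi1, H1⟩ := hF _ h01 0
    obtain ⟨i2, hi2, H2⟩ := hF _ h12 0
    obtain ⟨i3, hi3, H3⟩ := hF _ h02 0
    have hi1' : i1 < 2 := hi1
    have hi2' : i2 < 2 := hi2
    have hi3' : i3 < 2 := hi3
    have hcases : i1 = i2 ∨ i1 = i3 ∨ i2 = i3 := by omega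
    rcases hcases with h | h | h
    · exact key _ _ _ (by decide) 1 (by decide) (by decide) H1 (h ▸ H2)
    · exact key _ _ _ (by decide) 0 (by decide) (by decide) H1 (h ▸ H3)
    · exact key _ _ _ (by decide) 2 (by decide) (by decide) H2 (h ▸ H3)
  · refine ⟨fun t => ⟨t % 2, Nat.mod_lt _ (by norm_num)⟩, ?_⟩
    intro i t
    by_cases h : t % 2 = i.val
    · exact ⟨0, by norm_num, Fin.ext (by simpa using h)⟩
    · refine ⟨1, by norm_num, Fin.ext ?_⟩
      have := i.isLt
      simp only
      omega

end PolySched
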